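/- Let m ≥ 2 be an integer and let L be a finite generalized thick m-gon with red/blue bipartition. Then there exist integers r, b ≥ 2 such that every red vertex of L is contained in exactly r+1 edges and every blue vertex is contained in exactly b+1 edges; moreover if m is odd then r = b. -/

import Mathlib

open SimpleGraph Walk List
set_option linter.unusedSectionVars false

variable {V : Type} [Fintype V] [DecidableEq V] {G : SimpleGraph V} [DecidableRel G.Adj]

private lemma support_eq_map_getVert {u v : V} (w : G.Walk u v) :
    w.support = (List.range (w.length + 1)).map w.getVert := by
  induction w with
  | nil => simp [Walk.getVert]
  | cons h p ih =>
      rw [Walk.support_cons, Walk.length_cons, List.range_succ_eq_map]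
      simp only [List.map_cons, List.map_map]
      rw [ih]
      simp [Function.comp_def, Walk.getVert_cons_succ]

private lemma edges_eq_map_getVert {u v : V} (w : G.Walk u v) :
    w.edges = (List.range w.length).map (fun i => s(w.getVert i, w.getVert (i+1))) := by
  induction w with
  | nil => simp
  | cons h p ih =>
      rw [Walk.edges_cons, Walk.length_cons, List.range_succ_eq_map]
      simp only [List.map_cons, List.map_map]
      rw [ih]
      simp [Function.comp_def, Walk.getVert_cons_succ]

private lemma mem_edges_iff_getVert {u v : V} (w : G.Walk u v) (e : Sym2 V) :
    e ∈ w.edges ↔ ∃ i, i < w.length ∧ e = s(w.getVert i, w.getVert (i+1)) := by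
  rw [edges_eq_map_getVert]
  simp [eq_comm]

private lemma edge_getVert_mem {u v : V} (w : G.Walk u v) {i : ℕ} (hi : i < w.length) :
    s(w.getVert i, w.getVert (i+1)) ∈ w.edges := by
  rw [mem_edges_iff_getVert]; exact ⟨i, hi, rfl⟩

private lemma cycle_support_tail_getVert {a : V} (c : G.Walk a a) :
    c.support.tail = (List.range c.length).map (fun i => c.getVert (i+1)) := by
  rw [support_eq_map_getVert, List.range_succ_eq_map]
  simp [Function.comp_def]

/-- getVert is injective on `[0, length-1]` for a cycle. -/
private lemma cycle_getVert_inj {a : V} {c : G.Walk a a} (hc : c.IsCycle)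
    {i j : ℕ} (hi : i < c.length) (hj : j < c.length) (h : c.getVert i = c.getVert j) :
    i = j := by
  have hnd : c.support.tail.Nodup := hc.2
  rw [cycle_support_tail_getVert] at hnd
  have hinj := List.inj_on_of_nodup_map hnd
  simp only [List.mem_range] at hinj
  have key : ∀ i j : ℕ, 1 ≤ i → i ≤ c.length → 1 ≤ j → j ≤ c.length →
      c.getVert i = c.getVert j → i = j := by
    intro i j h1 h2 h3 h4 hg
    have e1 : i - 1 + 1 = i := by omega
    have e2 : j - 1 + 1 = j := by omega
    have := hinj (show i - 1 < c.length by omega) (show j - 1 < c.length by omega)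
      (by rw [e1, e2]; exact hg)
    omega
  have hL : c.getVert c.length = a := Walk.getVert_length c
  have h3 : 3 ≤ c.length := hc.three_le_length
  rcases Nat.eq_zero_or_pos i with rfl | hi0
  · rcases Nat.eq_zero_or_pos j with rfl | hj0
    · rfl
    · exfalso
      rw [Walk.getVert_zero] at h
      have := key j c.length (by omega) (by omega) (by omega) (by omega)
        (by rw [hL]; exact h.symm)
      omega
  · rcases Nat.eq_zero_or_pos j with rfl | hj0
    · exfalso
      rw [Walk.getVert_zero] at h
      have := key i c.length (by omega) (by omega) (by omega) (by omega)
        (by rw [hL]; exact h)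
      omega
    · exact key i j (by omega) (by omega) (by omega) (by omega) h

/-- Prefix of a walk of given length. -/
private def takeW : ∀ {u v : V} (w : G.Walk u v) (n : ℕ), G.Walk u (w.getVert n)
  | _, _, w, 0 => Walk.nil.copy rfl (w.getVert_zero).symm
  | _, _, Walk.nil, _ + 1 => Walk.nil
  | _, _, Walk.cons h p, n + 1 => (Walk.cons h (takeW p n)).copy rfl rfl

@[simp] private lemma takeW_length : ∀ {u v : V} (w : G.Walk u v) (n : ℕ), n ≤ w.length →
    (takeW w n).length = n
  | _, _, w, 0, _ => by simp [takeW]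
  | _, _, Walk.nil, n + 1, h => by simp at h
  | _, _, Walk.cons h p, n + 1, hn => by
      simp [takeW, takeW_length p n (by simpa using hn)]

private lemma takeW_getVert : ∀ {u v : V} (w : G.Walk u v) (n i : ℕ), i ≤ n →
    (takeW w n).getVert i = w.getVert i
  | _, _, w, 0, i, h => by
      simp_all [takeW]
  | _, _, Walk.nil, n + 1, i, h => by
      simp [takeW, Walk.getVert]
  | _, _, Walk.cons hadj p, n + 1, 0, h => by
      simp [takeW]
  | _, _, Walk.cons hadj p, n + 1, i + 1, h => by
      simp only [takeW, Walk.getVert_copy, Walk.getVert_cons_succ]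
      exact takeW_getVert p n i (by omega)

private lemma takeW_length_le : ∀ {u v : V} (w : G.Walk u v) (n : ℕ),
    (takeW w n).length ≤ w.length
  | _, _, w, 0 => by simp [takeW]
  | _, _, Walk.nil, n + 1 => by simp [takeW]
  | _, _, Walk.cons h p, n + 1 => by
      simpa [takeW] using takeW_length_le p n

private lemma takeW_support : ∀ {u v : V} (w : G.Walk u v) (n : ℕ),
    (takeW w n).support = (List.range ((takeW w n).length + 1)).map w.getVert := by
  intro u v w n
  rw [support_eq_map_getVert]
  apply List.map_congr_left
  intro i hi
  simp only [List.mem_range] at hi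
  exact takeW_getVert w n i (by
    by_cases hn : n ≤ w.length
    · have := takeW_length w n hn; omega
    · have := takeW_length_le w n
      omega)

private lemma takeW_isPath_of_cycle {a : V} {c : G.Walk a a} (hc : c.IsCycle)
    {n : ℕ} (hn : n ≤ c.length - 1) : (takeW c n).IsPath := by
  rw [Walk.isPath_def, takeW_support]
  have h3 := hc.three_le_length
  have hlen : (takeW c n).length = n := takeW_length c n (by omega)
  refine List.Nodup.map_on ?_ List.nodup_range
  intro i hi j hj hij
  simp only [List.mem_range, hlen] at hi hj
  exact cycle_getVert_inj hc (by omega) (by omega) hij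

private lemma IsCycleReverse {a : V} {c : G.Walk a a} (hc : c.IsCycle) :
    c.reverse.IsCycle := by
  have h3 := hc.three_le_length
  rw [Walk.isCycle_def]
  refine ⟨hc.isTrail.reverse, ?_, ?_⟩
  · intro hnil
    apply hc.ne_nil
    have := congr_arg Walk.reverse hnil
    simpa using this
  · rw [cycle_support_tail_getVert]
    refine List.Nodup.map_on ?_ List.nodup_range
    intro i hi j hj hij
    simp only [List.mem_range, Walk.length_reverse] at hi hj
    rw [Walk.getVert_reverse, Walk.getVert_reverse] at hij
    have := cycle_getVert_inj hc
      (show c.length - (i+1) < c.length by omega)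
      (show c.length - (j+1) < c.length by omega) hij
    omega

private lemma cycle_mem_support_iff_tail {a : V} {c : G.Walk a a} (hc : c.IsCycle) (x : V) :
    x ∈ c.support ↔ x ∈ c.support.tail := by
  have h3 := hc.three_le_length
  have hmem : a ∈ c.support.tail := by
    rw [cycle_support_tail_getVert]
    refine List.mem_map.2 ⟨c.length - 1, List.mem_range.2 (by omega), ?_⟩
    have : c.length - 1 + 1 = c.length := by omega
    rw [this, Walk.getVert_length]
  rw [Walk.support_eq_cons, List.mem_cons]
  constructor
  · rintro (rfl | h)
    · exact hmem
    · exact h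
  · intro h; exact Or.inr h

private lemma cycle_two_nbrs {a : V} {c : G.Walk a a} (hc : c.IsCycle) {i : ℕ}
    (h1 : 1 ≤ i) (h2 : i ≤ c.length - 1) {y : V}
    (hy : s(c.getVert i, y) ∈ c.edges) : y = c.getVert (i-1) ∨ y = c.getVert (i+1) := by
  have h3 := hc.three_le_length
  obtain ⟨j, hj, hej⟩ := (mem_edges_iff_getVert c _).1 hy
  rw [Sym2.eq_iff] at hej
  rcases hej with ⟨hx, hy'⟩ | ⟨hx, hy'⟩
  · have : i = j := cycle_getVert_inj hc (by omega) hj hx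
    right; rw [this]; exact hy'
  · by_cases hjl : j + 1 < c.length
    · have : i = j + 1 := cycle_getVert_inj hc (by omega) hjl hx
      left; rw [this]; simpa using hy'
    · have hje : j + 1 = c.length := by omega
      exfalso
      have : c.getVert i = c.getVert 0 := by
        calc c.getVert i = c.getVert (j+1) := hx
          _ = c.getVert c.length := by rw [hje]
          _ = a := Walk.getVert_length c
          _ = c.getVert 0 := (Walk.getVert_zero c).symm
      have := cycle_getVert_inj hc (by omega) (by omega) this
      omega

private lemma cycle_two_nbrs_zero {a : V} {c : G.Walk a a} (hc : c.IsCycle) {y : V}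
    (hy : s(a, y) ∈ c.edges) : y = c.getVert 1 ∨ y = c.getVert (c.length - 1) := by
  have h3 := hc.three_le_length
  obtain ⟨j, hj, hej⟩ := (mem_edges_iff_getVert c _).1 hy
  have ha : a = c.getVert 0 := (Walk.getVert_zero c).symm
  rw [Sym2.eq_iff] at hej
  rcases hej with ⟨hx, hy'⟩ | ⟨hx, hy'⟩
  · have : (0 : ℕ) = j := cycle_getVert_inj hc (by omega) hj (by rw [← ha]; exact hx)
    left; rw [← this] at hy'; simpa using hy'
  · by_cases hjl : j + 1 < c.length
    · exfalso
      have : (0 : ℕ) = j + 1 := cycle_getVert_inj hc (by omega) hjl (by rw [← ha]; exact hx)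
      omega
    · have hje : j + 1 = c.length := by omega
      right; rw [hy', ← hje]; simp

/-- Normalize a cycle through edge s(a,b) to start `a, b, ...`. -/
private lemma cycle_normalize {a b v : V} {c : G.Walk v v} (hc : c.IsCycle)
    (he : s(a, b) ∈ c.edges) :
    ∃ c' : G.Walk a a, c'.IsCycle ∧ c'.length = c.length ∧
      (∀ e, e ∈ c'.edges ↔ e ∈ c.edges) ∧ (∀ x, x ∈ c'.support ↔ x ∈ c.support) ∧
      c'.getVert 1 = b := by
  have ha : a ∈ c.support := c.fst_mem_support_of_mem_edges he
  set c₀ := c.rotate a ha with hc₀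
  have hc₀c : c₀.IsCycle := hc.rotate ha
  have hlen₀ : c₀.length = c.length := by
    have h1 := c.rotate_edges a ha
    have := h1.perm.length_eq
    rwa [Walk.length_edges, Walk.length_edges] at this
  have hedges₀ : ∀ e, e ∈ c₀.edges ↔ e ∈ c.edges := fun e => (c.rotate_edges a ha).mem_iff
  have hsupp₀ : ∀ x, x ∈ c₀.support ↔ x ∈ c.support := by
    intro x
    rw [cycle_mem_support_iff_tail hc₀c, cycle_mem_support_iff_tail hc,
      (c.support_rotate a ha).mem_iff]
  have he₀ : s(a, b) ∈ c₀.edges := (hedges₀ _).2 he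
  have hb : b = c₀.getVert 1 ∨ b = c₀.getVert (c₀.length - 1) := cycle_two_nbrs_zero hc₀c he₀
  rcases hb with hb | hb
  · exact ⟨c₀, hc₀c, hlen₀, hedges₀, hsupp₀, hb.symm⟩
  · refine ⟨c₀.reverse, IsCycleReverse hc₀c, by simpa using hlen₀, ?_, ?_, ?_⟩
    · intro e; rw [Walk.edges_reverse, List.mem_reverse]; exact hedges₀ e
    · intro x; rw [Walk.support_reverse, List.mem_reverse]; exact hsupp₀ x
    · rw [Walk.getVert_reverse]
      exact hb.symm

private lemma path_edge_start_end {x a : V} (w : G.Walk x a) (hw : w.IsPath)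
    (he : s(x, a) ∈ w.edges) : w.length = 1 := by
  induction w with
  | nil => simp at he
  | cons h w' ih =>
      rename_i u c d
      rw [Walk.edges_cons, List.mem_cons] at he
      rcases he with he | he
      · rw [Sym2.eq_iff] at he
        rcases he with ⟨-, rfl⟩ | ⟨h1, h2⟩
        · have : w' = Walk.nil := by
            have := hw.of_cons
            rwa [isPath_iff_eq_nil] at this
          simp [this]
        · exact absurd h1 h.ne
      · exfalso
        have hx : u ∈ w'.support := w'.fst_mem_support_of_mem_edges he
        rw [Walk.cons_isPath_iff] at hw
        exact hw.2 hx

private lemma getVert_one_of_takeUntil_length_one {x y a : V} (q : G.Walk x y)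
    (ha : a ∈ q.support) (h1 : (q.takeUntil a ha).length = 1) : q.getVert 1 = a := by
  conv_lhs => rw [← q.take_spec ha]
  rw [Walk.getVert_append]
  simp [h1]

private lemma two_paths_aux : ∀ (N M : ℕ) {x y : V} (p q : G.Walk x y),
    p.length + q.length < N → p.length < M → p.IsPath → q.IsPath → p ≠ q →
    ∃ (u : V) (c : G.Walk u u), c.IsCycle ∧ c.length ≤ p.length + q.length := by
  intro N
  induction N with
  | zero => intro M x y p q h; omega
  | succ N ihN =>
      intro M
      induction M with
      | zero => intro x y p q hN hM; omega
      | succ M ihM =>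
      intro x y p q hN hM hp hq hne
      cases p with
      | nil =>
          exfalso
          have : q = Walk.nil := by rwa [isPath_iff_eq_nil] at hq
          exact hne (this.symm ▸ rfl)
      | cons hxa p' =>
          rename_i a
          cases q with
          | nil =>
              exfalso
              have := isPath_iff_eq_nil.1 hp
              simp at this
          | cons hxb q' =>
              rename_i b
              have hp' : p'.IsPath := hp.of_cons
              have hq' : q'.IsPath := hq.of_cons
              by_cases hab : a = b
              · subst hab
                have hne' : p' ≠ q' := by
                  intro hpq
                  apply hne
                  rw [hpq, Subsingleton.elim hxa hxb]
                obtain ⟨u, c, hc, hlen⟩ := ihN (p'.length + 1) p' q'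
                  (by simp at hN ⊢; omega) (by omega) hp' hq' hne'
                exact ⟨u, c, hc, by simp; omega⟩
              · by_cases haq : a ∈ (Walk.cons hxb q').support
                · have hL1 : ((Walk.cons hxb q').takeUntil a haq).length
                      + ((Walk.cons hxb q').dropUntil a haq).length
                      = (Walk.cons hxb q').length := by
                    have := congr_arg Walk.length ((Walk.cons hxb q').take_spec haq)
                    rwa [Walk.length_append] at this
                  by_cases hpq2 : p' = (Walk.cons hxb q').dropUntil a haq
                  · have hq₁p : ((Walk.cons hxb q').takeUntil a haq).IsPath :=
                      hq.takeUntil haq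
                    have hq₁len2 : 2 ≤ ((Walk.cons hxb q').takeUntil a haq).length := by
                      rcases Nat.lt_or_ge ((Walk.cons hxb q').takeUntil a haq).length 2
                        with h | h
                      · interval_cases hl : ((Walk.cons hxb q').takeUntil a haq).length
                        · exact absurd (Walk.eq_of_length_eq_zero hl) hxa.ne
                        · exfalso
                          apply hab
                          have := getVert_one_of_takeUntil_length_one _ haq hl
                          simpa [Walk.getVert_cons_succ] using this.symm
                      · exact h
                    refine ⟨x, Walk.cons hxa ((Walk.cons hxb q').takeUntil a haq).reverse,
                      ?_, ?_⟩
                    · rw [Walk.isCycle_def]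
                      refine ⟨?_, by simp, ?_⟩
                      · rw [Walk.isTrail_cons]
                        refine ⟨hq₁p.reverse.isTrail, ?_⟩
                        rw [Walk.edges_reverse, List.mem_reverse]
                        intro hmem
                        have := path_edge_start_end _ hq₁p (Sym2.eq_swap ▸ hmem)
                        omega
                      · simp only [Walk.support_cons, List.tail_cons]
                        exact hq₁p.reverse.support_nodup
                    · simp only [Walk.length_cons, Walk.length_reverse] at *
                      omega
                  · have hq₂p : ((Walk.cons hxb q').dropUntil a haq).IsPath :=
                      hq.dropUntil haq
                    obtain ⟨u, c, hc, hlen⟩ := ihN (p'.length + 1) p' _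
                      (by simp only [Walk.length_cons] at hN hL1 ⊢; omega) (by omega)
                      hp' hq₂p hpq2
                    exact ⟨u, c, hc, by simp only [Walk.length_cons] at *; omega⟩
                · by_cases hbp : b ∈ (Walk.cons hxa p').support
                  · have hL1 : ((Walk.cons hxa p').takeUntil b hbp).length
                        + ((Walk.cons hxa p').dropUntil b hbp).length
                        = (Walk.cons hxa p').length := by
                      have := congr_arg Walk.length ((Walk.cons hxa p').take_spec hbp)
                      rwa [Walk.length_append] at this
                    by_cases hqp2 : q' = (Walk.cons hxa p').dropUntil b hbp
                    · have hp₁p : ((Walk.cons hxa p').takeUntil b hbp).IsPath :=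
                        hp.takeUntil hbp
                      have hp₁len2 : 2 ≤ ((Walk.cons hxa p').takeUntil b hbp).length := by
                        rcases Nat.lt_or_ge ((Walk.cons hxa p').takeUntil b hbp).length 2
                          with h | h
                        · interval_cases hl : ((Walk.cons hxa p').takeUntil b hbp).length
                          · exact absurd (Walk.eq_of_length_eq_zero hl) hxb.ne
                          · exfalso
                            apply hab
                            have := getVert_one_of_takeUntil_length_one _ hbp hl
                            simpa [Walk.getVert_cons_succ] using this
                        · exact h
                      refine ⟨x, Walk.cons hxb ((Walk.cons hxa p').takeUntil b hbp).reverse,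
                        ?_, ?_⟩
                      · rw [Walk.isCycle_def]
                        refine ⟨?_, by simp, ?_⟩
                        · rw [Walk.isTrail_cons]
                          refine ⟨hp₁p.reverse.isTrail, ?_⟩
                          rw [Walk.edges_reverse, List.mem_reverse]
                          intro hmem
                          have := path_edge_start_end _ hp₁p (Sym2.eq_swap ▸ hmem)
                          omega
                        · simp only [Walk.support_cons, List.tail_cons]
                          exact hp₁p.reverse.support_nodup
                      · simp only [Walk.length_cons, Walk.length_reverse] at *
                        omega
                    · have hp₂p : ((Walk.cons hxa p').dropUntil b hbp).IsPath :=
                        hp.dropUntil hbp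
                      obtain ⟨u, c, hc, hlen⟩ := ihN (q'.length + 1) q' _
                        (by simp only [Walk.length_cons] at hN hL1 ⊢; omega) (by omega)
                        hq' hp₂p hqp2
                      exact ⟨u, c, hc, by simp only [Walk.length_cons] at *; omega⟩
                  · have hQ₁p : (Walk.cons hxa.symm (Walk.cons hxb q')).IsPath := by
                      rw [Walk.cons_isPath_iff]
                      exact ⟨hq, haq⟩
                    have hne' : p' ≠ Walk.cons hxa.symm (Walk.cons hxb q') := by
                      intro heq
                      have hxs : x ∈ (Walk.cons hxa.symm (Walk.cons hxb q')).support := by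
                        simp
                      rw [← heq] at hxs
                      rw [Walk.cons_isPath_iff] at hp
                      exact hp.2 hxs
                    obtain ⟨u, c, hc, hlen⟩ := ihM p' _
                      (by simp only [Walk.length_cons] at hN ⊢; omega)
                      (by simp only [Walk.length_cons] at hM ⊢; omega) hp' hQ₁p hne'
                    exact ⟨u, c, hc, by simp only [Walk.length_cons] at *; omega⟩

private lemma exists_cycle_of_two_paths {x y : V} (p q : G.Walk x y)
    (hp : p.IsPath) (hq : q.IsPath) (hne : p ≠ q) :
    ∃ (u : V) (c : G.Walk u u), c.IsCycle ∧ c.length ≤ p.length + q.length :=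
  two_paths_aux (p.length + q.length + 1) (p.length + 1) p q (by omega) (by omega) hp hq hne

private lemma getVert_mem_support {u v : V} (w : G.Walk u v) (i : ℕ) :
    w.getVert i ∈ w.support := by
  rcases le_or_gt i w.length with h | h
  · exact Walk.mem_support_iff_exists_getVert.2 ⟨i, rfl, h⟩
  · rw [Walk.getVert_of_length_le w h.le]
    exact w.end_mem_support

section H2

variable {m : ℕ}

/-- Position rigidity: common vertices of two normalized 2m-cycles sharing the
oriented starting edge sit at the same positions. -/
private lemma posK (hm : 2 ≤ m)
    (h2 : ∀ (v₁ v₂ : V) (c₁ : G.Walk v₁ v₁) (c₂ : G.Walk v₂ v₂),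
      c₁.IsCycle → c₂.IsCycle → c₁.length = 2 * m → c₂.length = 2 * m →
      (∃ e, e ∈ c₁.edges ∧ e ∈ c₂.edges) →
      ∃ f : {x : V // x ∈ c₁.support} ≃ {x : V // x ∈ c₂.support},
        (∀ a b : {x : V // x ∈ c₁.support},
          s(a.1, b.1) ∈ c₁.edges ↔ s((f a).1, (f b).1) ∈ c₂.edges) ∧
        (∀ a : {x : V // x ∈ c₁.support}, a.1 ∈ c₂.support → (f a).1 = a.1))
    {a b : V} {c₁ c₂ : G.Walk a a}
    (hc₁ : c₁.IsCycle) (hc₂ : c₂.IsCycle) (hl₁ : c₁.length = 2 * m) (hl₂ : c₂.length = 2 * m)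
    (hb₁ : c₁.getVert 1 = b) (hb₂ : c₂.getVert 1 = b) :
    ∀ i, i ≤ 2 * m → ∀ u : V, c₁.getVert i = u → u ∈ c₂.support → c₂.getVert i = u := by
  have he₁ : s(a, b) ∈ c₁.edges := by
    have := edge_getVert_mem c₁ (i := 0) (by omega)
    rwa [Walk.getVert_zero, hb₁] at this
  have he₂ : s(a, b) ∈ c₂.edges := by
    have := edge_getVert_mem c₂ (i := 0) (by omega)
    rwa [Walk.getVert_zero, hb₂] at this
  obtain ⟨f, hfe, hff⟩ := h2 a a c₁ c₂ hc₁ hc₂ hl₁ hl₂ ⟨s(a, b), he₁, he₂⟩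
  set F : ℕ → V := fun i => (f ⟨c₁.getVert i, _root_.getVert_mem_support c₁ i⟩).1 with hF
  have key : ∀ i, i ≤ 2 * m → F i = c₂.getVert i := by
    intro i
    induction i using Nat.strong_induction_on with
    | _ i IH =>
        match i with
        | 0 =>
            intro _
            have : (a : V) ∈ c₂.support := c₂.start_mem_support
            simp only [hF, Walk.getVert_zero]
            exact hff ⟨a, _⟩ this
        | 1 =>
            intro _
            have hbmem : b ∈ c₂.support := by
              rw [← hb₂]; exact _root_.getVert_mem_support c₂ 1
            simp only [hF, hb₁]
            rw [hb₂]
            exact hff ⟨b, _⟩ hbmem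
        | (i + 2) =>
            intro hi
            have IH1 : F (i + 1) = c₂.getVert (i + 1) := IH (i + 1) (by omega) (by omega)
            have IH0 : F i = c₂.getVert i := IH i (by omega) (by omega)
            have hE : s(c₁.getVert (i + 1), c₁.getVert (i + 2)) ∈ c₁.edges :=
              edge_getVert_mem c₁ (by omega)
            have hE₂ : s(F (i + 1), F (i + 2)) ∈ c₂.edges := by
              rw [← hfe ⟨c₁.getVert (i + 1), _⟩ ⟨c₁.getVert (i + 2), _⟩]
              exact hE
            rw [IH1] at hE₂
            have := cycle_two_nbrs hc₂ (i := i + 1) (by omega) (by omega) hE₂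
            rcases this with hcase | hcase
            · exfalso
              simp only [Nat.add_sub_cancel] at hcase
              rw [← IH0] at hcase
              have hval : c₁.getVert (i + 2) = c₁.getVert i := by
                have := Subtype.ext hcase
                have := f.injective this
                exact congrArg Subtype.val this
              by_cases h2m : i + 2 < 2 * m
              · have := cycle_getVert_inj hc₁ (by omega) (by omega) hval
                omega
              · have he : i + 2 = 2 * m := by omega
                have hva : c₁.getVert (i + 2) = c₁.getVert 0 := by
                  rw [Walk.getVert_zero, he, ← hl₁, Walk.getVert_length]
                have : c₁.getVert i = c₁.getVert 0 := by rw [← hva, hval]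
                have := cycle_getVert_inj hc₁ (by omega) (by omega) this
                omega
            · simpa only [Nat.add_sub_cancel] using hcase
  intro i hi u hu humem
  have h1 := key i hi
  rw [hF] at h1
  simp only at h1
  have h2' : (f ⟨c₁.getVert i, _root_.getVert_mem_support c₁ i⟩).1 = c₁.getVert i :=
    hff ⟨c₁.getVert i, _root_.getVert_mem_support c₁ i⟩
      (by simpa [hu] using humem)
  calc c₂.getVert i = _ := h1.symm
    _ = c₁.getVert i := h2'
    _ = u := hu

end H2

private lemma no_short_cycle (hm : 2 ≤ m)
    (h1 : ∀ e₁ ∈ G.edgeSet, ∀ e₂ ∈ G.edgeSet, ∃ (v : V) (c : G.Walk v v),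
      c.IsCycle ∧ c.length = 2 * m ∧ e₁ ∈ c.edges ∧ e₂ ∈ c.edges)
    (h2 : ∀ (v₁ v₂ : V) (c₁ : G.Walk v₁ v₁) (c₂ : G.Walk v₂ v₂),
      c₁.IsCycle → c₂.IsCycle → c₁.length = 2 * m → c₂.length = 2 * m →
      (∃ e, e ∈ c₁.edges ∧ e ∈ c₂.edges) →
      ∃ f : {x : V // x ∈ c₁.support} ≃ {x : V // x ∈ c₂.support},
        (∀ a b : {x : V // x ∈ c₁.support},
          s(a.1, b.1) ∈ c₁.edges ↔ s((f a).1, (f b).1) ∈ c₂.edges) ∧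
        (∀ a : {x : V // x ∈ c₁.support}, a.1 ∈ c₂.support → (f a).1 = a.1)) :
    ∀ (u : V) (c : G.Walk u u), c.IsCycle → 2 * m ≤ c.length := by
  classical
  by_contra hcon
  push_neg at hcon
  obtain ⟨u₀, c₀, hc₀, hlen₀⟩ := hcon
  have hP : ∃ n, ∃ (u : V) (c : G.Walk u u), c.IsCycle ∧ c.length = n ∧ n < 2 * m :=
    ⟨c₀.length, u₀, c₀, hc₀, rfl, hlen₀⟩
  set g := Nat.find hP with hgdef
  obtain ⟨v₀, D, hD, hDg0, hg2m0⟩ := Nat.find_spec hP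
  have hDg : D.length = g := by rw [hgdef]; exact hDg0
  have hg2m : g < 2 * m := by rw [hgdef]; exact hg2m0
  have hmin : ∀ k, k < g → ¬ ∃ (u : V) (c : G.Walk u u), c.IsCycle ∧ c.length = k :=
    fun k hk hex => by
      obtain ⟨u, c, hc, hck⟩ := hex
      exact Nat.find_min hP hk ⟨u, c, hc, hck, by omega⟩
  have hg3 : 3 ≤ g := by have := hD.three_le_length; omega
  have hDe : ∀ i, i < g → s(D.getVert i, D.getVert (i + 1)) ∈ D.edges :=
    fun i hi => edge_getVert_mem D (by omega)
  have hDeG : ∀ i, i < g → s(D.getVert i, D.getVert (i + 1)) ∈ G.edgeSet :=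
    fun i hi => D.edges_subset_edgeSet (hDe i hi)
  have hDinj : ∀ i j, i < g → j < g → D.getVert i = D.getVert j → i = j := by
    intro i j hi hj h
    exact cycle_getVert_inj hD (by omega) (by omega) h
  -- the induction claim
  have claim : ∀ t, 1 ≤ t → t ≤ g - 1 → ∃ c : G.Walk v₀ v₀,
      c.IsCycle ∧ c.length = 2 * m ∧ c.getVert 1 = D.getVert 1 ∧
      c.getVert t = D.getVert t := by
    intro t ht
    induction t, ht using Nat.le_induction with
    | base =>
        intro _
        obtain ⟨w, c, hc, hcl, he₁, -⟩ := h1 _ (hDeG 0 (by omega)) _ (hDeG 0 (by omega))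
        rw [Walk.getVert_zero] at he₁
        obtain ⟨c', hc', hlen', hedg', hsup', hv1'⟩ := cycle_normalize hc he₁
        exact ⟨c', hc', by omega, hv1', hv1'⟩
    | succ t ht IH =>
        intro hgt
        obtain ⟨c, hc, hcl, hcv1, hcvt⟩ := IH (by omega)
        obtain ⟨w, c₂, hc₂, hc₂l, he₁, he₂⟩ := h1 _ (hDeG 0 (by omega)) _ (hDeG t (by omega))
        rw [Walk.getVert_zero] at he₁
        obtain ⟨c₂', hc₂', hl₂', hedg₂', hsup₂', hv1₂'⟩ := cycle_normalize hc₂ he₁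
        have hl₂'' : c₂'.length = 2 * m := by omega
        have he₂' : s(D.getVert t, D.getVert (t + 1)) ∈ c₂'.edges := (hedg₂' _).2 he₂
        have hvtsup : D.getVert t ∈ c₂'.support := c₂'.fst_mem_support_of_mem_edges he₂'
        have hpos : c₂'.getVert t = D.getVert t :=
          posK hm h2 hc hc₂' hcl hl₂'' hcv1 hv1₂' t (by omega) _ hcvt hvtsup
        have hy : s(c₂'.getVert t, D.getVert (t + 1)) ∈ c₂'.edges := by rw [hpos]; exact he₂'
        have htwo := cycle_two_nbrs hc₂' (i := t) (by omega) (by omega) hy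
        rcases htwo with hB | hA
        · -- bad case: position t - 1
          exfalso
          rcases Nat.lt_or_ge t 2 with ht2 | ht2
          · -- t = 1 : D.getVert 2 = v₀
            have ht1 : t = 1 := by omega
            subst ht1
            have : D.getVert 2 = D.getVert 0 := by
              rw [Walk.getVert_zero]
              simpa using hB
            have := hDinj 2 0 (by omega) (by omega) this
            omega
          · -- t ≥ 2 : two short paths from v₀ to D.getVert (t+1)
            have hA' : (takeW c₂' (t - 1)).IsPath :=
              takeW_isPath_of_cycle hc₂' (by omega)
            have hAlen : (takeW c₂' (t - 1)).length = t - 1 :=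
              takeW_length c₂' (t - 1) (by omega)
            have hAend : c₂'.getVert (t - 1) = D.getVert (t + 1) := hB.symm
            have hB' : (takeW D.reverse (g - t - 1)).IsPath :=
              takeW_isPath_of_cycle (IsCycleReverse hD) (by simp; omega)
            have hBlen : (takeW D.reverse (g - t - 1)).length = g - t - 1 :=
              takeW_length D.reverse (g - t - 1) (by simp; omega)
            have hBend : D.reverse.getVert (g - t - 1) = D.getVert (t + 1) := by
              rw [Walk.getVert_reverse]
              congr 1
              omega
            set A : G.Walk v₀ (D.getVert (t + 1)) := (takeW c₂' (t - 1)).copy rfl hAend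
            set B : G.Walk v₀ (D.getVert (t + 1)) := (takeW D.reverse (g - t - 1)).copy rfl hBend
            have hApath : A.IsPath := by simpa [A] using hA'
            have hBpath : B.IsPath := by simpa [B] using hB'
            have hABne : A ≠ B := by
              intro hAB
              have hlenEq : A.length = B.length := by rw [hAB]
              have hlenEq' : t - 1 = g - t - 1 := by
                simpa [A, B, hAlen, hBlen] using hlenEq
              have hgv1 : A.getVert 1 = B.getVert 1 := by rw [hAB]
              have hgA : A.getVert 1 = D.getVert 1 := by
                simp only [A, Walk.getVert_copy]
                rw [takeW_getVert c₂' (t - 1) 1 (by omega)]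
                exact hv1₂'
              have hgB : B.getVert 1 = D.getVert (g - 1) := by
                simp only [B, Walk.getVert_copy]
                rw [takeW_getVert D.reverse (g - t - 1) 1 (by omega), Walk.getVert_reverse]
                congr 1
                omega
              rw [hgA, hgB] at hgv1
              have := hDinj 1 (g - 1) (by omega) (by omega) hgv1
              omega
            obtain ⟨uu, cc, hcc, hcclen⟩ := exists_cycle_of_two_paths A B hApath hBpath hABne
            apply hmin cc.length (by
              have : A.length + B.length ≤ g - 2 := by
                simp only [A, B, Walk.length_copy, hAlen, hBlen]
                omega
              omega)
            exact ⟨uu, cc, hcc, rfl⟩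
        · exact ⟨c₂', hc₂', hl₂'', hv1₂', hA.symm⟩
  -- final contradiction
  obtain ⟨c, hc, hcl, hcv1, hcvlast⟩ := claim (g - 1) (by omega) le_rfl
  have hlaste : s(D.getVert (g - 1), v₀) ∈ D.edges := by
    have := hDe (g - 1) (by omega)
    have hgg : g - 1 + 1 = g := by omega
    rw [hgg] at this
    rwa [show D.getVert g = v₀ from by rw [← hDg]; exact D.getVert_length] at this
  have hlasteG : s(D.getVert (g - 1), v₀) ∈ G.edgeSet := D.edges_subset_edgeSet hlaste
  obtain ⟨w, c₃, hc₃, hc₃l, hee₁, hee₂⟩ := h1 _ (hDeG 0 (by omega)) _ hlasteG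
  rw [Walk.getVert_zero] at hee₁
  obtain ⟨c₃', hc₃', hl₃', hedg₃', hsup₃', hv1₃'⟩ := cycle_normalize hc₃ hee₁
  have hl₃'' : c₃'.length = 2 * m := by omega
  have hee₂' : s(D.getVert (g - 1), v₀) ∈ c₃'.edges := (hedg₃' _).2 hee₂
  have hwsup : D.getVert (g - 1) ∈ c₃'.support := c₃'.fst_mem_support_of_mem_edges hee₂'
  have hpos : c₃'.getVert (g - 1) = D.getVert (g - 1) :=
    posK hm h2 hc hc₃' hcl hl₃'' hcv1 hv1₃' (g - 1) (by omega) _ hcvlast hwsup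
  have hzero := cycle_two_nbrs_zero hc₃' (y := D.getVert (g - 1))
    (by rwa [Sym2.eq_swap] at hee₂')
  rcases hzero with hz | hz
  · rw [hv1₃'] at hz
    have := hDinj (g - 1) 1 (by omega) (by omega) hz
    omega
  · rw [← hpos] at hz
    have := cycle_getVert_inj hc₃' (i := g - 1) (j := c₃'.length - 1)
      (by omega) (by omega) hz
    omega

private lemma bool_eq_of_ne_ne {a b c : Bool} (h1 : a ≠ c) (h2 : b ≠ c) : a = b := by
  cases a <;> cases b <;> cases c <;> simp_all

section Metric

variable {m : ℕ} {col : V → Bool}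

private lemma walk_parity (hcol : ∀ u v : V, G.Adj u v → col u ≠ col v) :
    ∀ {u v : V} (w : G.Walk u v), (col u = col v ↔ Even w.length) := by
  intro u v w
  induction w with
  | nil => simp
  | cons h p ih =>
      rename_i x y z
      have hne := hcol x y h
      rw [Walk.length_cons, Nat.even_add_one, ← ih]
      cases hx : col x <;> cases hy : col y <;> cases hz : col z <;> simp_all

private lemma path_getVert_inj {u v : V} {p : G.Walk u v} (hp : p.IsPath)
    {i j : ℕ} (hi : i ≤ p.length) (hj : j ≤ p.length) (h : p.getVert i = p.getVert j) :
    i = j := by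
  have hnd : p.support.Nodup := hp.support_nodup
  rw [support_eq_map_getVert] at hnd
  have hinj := List.inj_on_of_nodup_map hnd
  simp only [List.mem_range] at hinj
  exact hinj (by omega) (by omega) h

private lemma takeW_isPath_of_path {u v : V} {p : G.Walk u v} (hp : p.IsPath)
    {n : ℕ} (hn : n ≤ p.length) : (takeW p n).IsPath := by
  rw [Walk.isPath_def, takeW_support]
  have hlen : (takeW p n).length = n := takeW_length p n hn
  refine List.Nodup.map_on ?_ List.nodup_range
  intro i hi j hj hij
  simp only [List.mem_range, hlen] at hi hj
  exact path_getVert_inj hp (by omega) (by omega) hij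

private lemma takeW_support_subset {u v : V} (p : G.Walk u v) (n : ℕ) {x : V}
    (hx : x ∈ (takeW p n).support) : x ∈ p.support := by
  rw [takeW_support] at hx
  obtain ⟨i, -, rfl⟩ := List.mem_map.1 hx
  exact _root_.getVert_mem_support p i

private lemma mem_support_dist_le {u x w : V} (p : G.Walk x w) (hu : u ∈ p.support) :
    G.dist u w ≤ p.length :=
  le_trans (SimpleGraph.dist_le (p.dropUntil u hu)) (Walk.length_dropUntil_le p hu)

variable (hm : 2 ≤ m)
  (h1 : ∀ e₁ ∈ G.edgeSet, ∀ e₂ ∈ G.edgeSet, ∃ (v : V) (c : G.Walk v v),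
      c.IsCycle ∧ c.length = 2 * m ∧ e₁ ∈ c.edges ∧ e₂ ∈ c.edges)
  (hgirth : ∀ (u : V) (c : G.Walk u u), c.IsCycle → 2 * m ≤ c.length)
  (hthick : ∀ v : V, 3 ≤ G.degree v)
  (hconn : G.Connected)

include hthick in
private lemma exists_nbr (v : V) : ∃ w, G.Adj v w := by
  have h3 := hthick v
  have : 0 < (G.neighborFinset v).card := by
    rw [card_neighborFinset_eq_degree]; omega
  obtain ⟨w, hw⟩ := Finset.card_pos.1 this
  exact ⟨w, (mem_neighborFinset G v w).1 hw⟩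

include hm h1 hthick in
private lemma dist_le_m (u v : V) : G.dist u v ≤ m := by
  obtain ⟨u', hu'⟩ := exists_nbr hthick u
  obtain ⟨v', hv'⟩ := exists_nbr hthick v
  obtain ⟨w, c, hc, hcl, he₁, he₂⟩ := h1 _ (G.mem_edgeSet.2 hu') _ (G.mem_edgeSet.2 hv')
  have hus : u ∈ c.support := c.fst_mem_support_of_mem_edges he₁
  have hvs : v ∈ c.support := c.fst_mem_support_of_mem_edges he₂
  set cu := c.rotate u hus with hcu
  have hcuc : cu.IsCycle := hc.rotate hus
  have hculen : cu.length = 2 * m := by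
    have h1' := c.rotate_edges u hus
    have h2' := h1'.perm.length_eq
    rw [Walk.length_edges, Walk.length_edges] at h2'
    rw [hcu]
    omega
  have hvs' : v ∈ cu.support := by
    rw [cycle_mem_support_iff_tail hcuc, (c.support_rotate u hus).mem_iff,
      ← cycle_mem_support_iff_tail hc]
    exact hvs
  obtain ⟨j, hjv, hjle⟩ := Walk.mem_support_iff_exists_getVert.1 hvs'
  rcases le_or_gt j m with hjm | hjm
  · have hW : G.dist u v ≤ ((takeW cu j).copy rfl hjv).length := SimpleGraph.dist_le _
    rw [Walk.length_copy, takeW_length cu j (by omega)] at hW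
    omega
  · have hrev : cu.reverse.getVert (2 * m - j) = v := by
      rw [Walk.getVert_reverse]
      rw [show cu.length - (2 * m - j) = j by omega]
      exact hjv
    have hW : G.dist u v ≤ ((takeW cu.reverse (2 * m - j)).copy rfl hrev).length :=
      SimpleGraph.dist_le _
    rw [Walk.length_copy, takeW_length cu.reverse (2 * m - j) (by simp; omega)] at hW
    omega

include hm h1 hgirth hthick hconn in
private lemma exists_opposite (u : V) : ∃ w, G.dist u w = m := by
  obtain ⟨u', hu'⟩ := exists_nbr hthick u
  obtain ⟨w₀, c, hc, hcl, he₁, -⟩ := h1 _ (G.mem_edgeSet.2 hu') _ (G.mem_edgeSet.2 hu')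
  have hus : u ∈ c.support := c.fst_mem_support_of_mem_edges he₁
  set cu := c.rotate u hus with hcu
  have hcuc : cu.IsCycle := hc.rotate hus
  have hculen : cu.length = 2 * m := by
    have h1' := c.rotate_edges u hus
    have h2' := h1'.perm.length_eq
    rw [Walk.length_edges, Walk.length_edges] at h2'
    rw [hcu]
    omega
  refine ⟨cu.getVert m, ?_⟩
  have hle : G.dist u (cu.getVert m) ≤ m := by
    have : G.dist u (cu.getVert m) ≤ (takeW cu m).length := SimpleGraph.dist_le _
    rwa [takeW_length cu m (by omega)] at this
  rcases lt_or_eq_of_le hle with hlt | he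
  · exfalso
    obtain ⟨P, hPp, hPl⟩ := hconn.exists_path_of_dist u (cu.getVert m)
    have hA : (takeW cu m).IsPath := takeW_isPath_of_cycle hcuc (by omega)
    have hAlen : (takeW cu m).length = m := takeW_length cu m (by omega)
    have hne : P ≠ takeW cu m := by
      intro hPA
      rw [hPA, hAlen] at hPl
      omega
    obtain ⟨uu, cc, hcc, hcclen⟩ := exists_cycle_of_two_paths P (takeW cu m) hPp hA hne
    have := hgirth uu cc hcc
    omega
  · exact he

include hgirth in
private lemma path_unique {x y : V} (P Q : G.Walk x y) (hP : P.IsPath) (hQ : Q.IsPath)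
    (hlen : P.length + Q.length < 2 * m) : P = Q := by
  by_contra hne
  obtain ⟨uu, cc, hcc, hcclen⟩ := exists_cycle_of_two_paths P Q hP hQ hne
  have := hgirth uu cc hcc
  omega

include hconn in
private lemma dist_parity (hcol : ∀ u v : V, G.Adj u v → col u ≠ col v) (u v : V) :
    (col u = col v ↔ Even (G.dist u v)) := by
  obtain ⟨P, -, hPl⟩ := hconn.exists_path_of_dist u v
  rw [← hPl]
  exact walk_parity hcol P

include hm h1 hthick hconn in
private lemma dist_step (hcol : ∀ u v : V, G.Adj u v → col u ≠ col v)
    {u w x : V} (hd : G.dist u w = m) (hx : G.Adj u x) : G.dist x w = m - 1 := by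
  have hle : G.dist x w ≤ m := dist_le_m hm h1 hthick x w
  have htri : G.dist u w ≤ G.dist u x + G.dist x w := hconn.dist_triangle
  have hux : G.dist u x ≤ 1 := by
    have := SimpleGraph.dist_le (Walk.cons hx Walk.nil)
    simpa using this
  have hnm : G.dist x w ≠ m := by
    intro heq
    have h1' := dist_parity hconn hcol u w
    have h2' := dist_parity hconn hcol x w
    rw [hd] at h1'
    rw [heq] at h2'
    have hne := hcol u x hx
    have : col u = col x := by
      rcases Nat.even_or_odd m with hE | hO
      · rw [h1'.2 hE, h2'.2 hE]
      · exact bool_eq_of_ne_ne (c := col w)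
          (fun hc => (Nat.not_even_iff_odd.2 hO) (h1'.1 hc))
          (fun hc => (Nat.not_even_iff_odd.2 hO) (h2'.1 hc))
    exact hne this
  omega

end Metric

section Degree

variable {m : ℕ} {col : V → Bool}
variable (hm : 2 ≤ m)
  (h1 : ∀ e₁ ∈ G.edgeSet, ∀ e₂ ∈ G.edgeSet, ∃ (v : V) (c : G.Walk v v),
      c.IsCycle ∧ c.length = 2 * m ∧ e₁ ∈ c.edges ∧ e₂ ∈ c.edges)
  (hgirth : ∀ (u : V) (c : G.Walk u u), c.IsCycle → 2 * m ≤ c.length)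
  (hthick : ∀ v : V, 3 ≤ G.degree v)
  (hconn : G.Connected)
  (hcol : ∀ u v : V, G.Adj u v → col u ≠ col v)

include hm h1 hgirth hthick hconn hcol in
private lemma degree_le_of_opposite {u w : V} (hd : G.dist u w = m) :
    G.degree u ≤ G.degree w := by
  classical
  rw [← card_neighborFinset_eq_degree, ← card_neighborFinset_eq_degree]
  set P : ∀ x : V, G.Walk x w := fun x => (hconn.exists_path_of_dist x w).choose with hP
  have hPspec : ∀ x : V, (P x).IsPath ∧ (P x).length = G.dist x w := fun x =>
    (hconn.exists_path_of_dist x w).choose_spec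
  apply Finset.card_le_card_of_injOn (fun x => (P x).getVert (m - 2))
  · intro x hx
    have hadj : G.Adj u x := (mem_neighborFinset G u x).1 hx
    have hdx : G.dist x w = m - 1 := dist_step hm h1 hthick hconn hcol hd hadj
    have hlen : (P x).length = m - 1 := (hPspec x).2.trans hdx
    have hadj2 : G.Adj ((P x).getVert (m - 2)) ((P x).getVert (m - 1)) := by
      have := (P x).adj_getVert_succ (i := m - 2) (by omega)
      rwa [show m - 2 + 1 = m - 1 by omega] at this
    rw [show (P x).getVert (m - 1) = w from by rw [← hlen]; exact (P x).getVert_length]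
      at hadj2
    exact (mem_neighborFinset G w _).2 hadj2.symm
  · intro x hx x' hx' hf
    simp only at hf
    have hadj : G.Adj u x := (mem_neighborFinset G u x).1 hx
    have hadj' : G.Adj u x' := (mem_neighborFinset G u x').1 hx'
    have hdx : G.dist x w = m - 1 := dist_step hm h1 hthick hconn hcol hd hadj
    have hdx' : G.dist x' w = m - 1 := dist_step hm h1 hthick hconn hcol hd hadj'
    have hlen : (P x).length = m - 1 := (hPspec x).2.trans hdx
    have hlen' : (P x').length = m - 1 := (hPspec x').2.trans hdx'
    have hT : (takeW (P x) (m - 2)).IsPath :=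
      takeW_isPath_of_path (hPspec x).1 (by omega)
    have hT' : (takeW (P x') (m - 2)).IsPath :=
      takeW_isPath_of_path (hPspec x').1 (by omega)
    have hu : u ∉ (takeW (P x) (m - 2)).support := by
      intro hmem
      have := mem_support_dist_le (P x) (takeW_support_subset (P x) (m - 2) hmem)
      rw [hlen] at this
      omega
    have hu' : u ∉ (takeW (P x') (m - 2)).support := by
      intro hmem
      have := mem_support_dist_le (P x') (takeW_support_subset (P x') (m - 2) hmem)
      rw [hlen'] at this
      omega
    set A₁ : G.Walk u ((P x).getVert (m - 2)) :=
      Walk.cons hadj (takeW (P x) (m - 2)) with hA₁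
    set A₂ : G.Walk u ((P x).getVert (m - 2)) :=
      (Walk.cons hadj' (takeW (P x') (m - 2))).copy rfl hf.symm with hA₂
    have hA₁p : A₁.IsPath := hT.cons hu
    have hA₂p : A₂.IsPath := by
      rw [hA₂, Walk.isPath_copy]
      exact hT'.cons hu'
    have hA₁l : A₁.length = m - 1 := by
      rw [hA₁, Walk.length_cons, takeW_length (P x) (m - 2) (by omega)]
      omega
    have hA₂l : A₂.length = m - 1 := by
      rw [hA₂, Walk.length_copy, Walk.length_cons, takeW_length (P x') (m - 2) (by omega)]
      omega
    have heq : A₁ = A₂ := path_unique hgirth A₁ A₂ hA₁p hA₂p (by omega)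
    have : A₁.getVert 1 = A₂.getVert 1 := by rw [heq]
    rw [hA₁, hA₂] at this
    simpa [Walk.getVert_cons_succ] using this

include hm h1 hgirth hthick hconn hcol in
private lemma degree_eq_of_opposite {u w : V} (hd : G.dist u w = m) :
    G.degree u = G.degree w :=
  le_antisymm (degree_le_of_opposite hm h1 hgirth hthick hconn hcol hd)
    (degree_le_of_opposite hm h1 hgirth hthick hconn hcol
      (by rwa [SimpleGraph.dist_comm] at hd))

end Degree

section Final

variable {m : ℕ} {col : V → Bool}
variable (hm : 2 ≤ m)
  (h1 : ∀ e₁ ∈ G.edgeSet, ∀ e₂ ∈ G.edgeSet, ∃ (v : V) (c : G.Walk v v),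
      c.IsCycle ∧ c.length = 2 * m ∧ e₁ ∈ c.edges ∧ e₂ ∈ c.edges)
  (hgirth : ∀ (u : V) (c : G.Walk u u), c.IsCycle → 2 * m ≤ c.length)
  (hthick : ∀ v : V, 3 ≤ G.degree v)
  (hconn : G.Connected)
  (hcol : ∀ u v : V, G.Adj u v → col u ≠ col v)

include hm h1 hgirth hthick hconn hcol in
private lemma degree_eq_of_common_nbr {z u u' : V} (hz : G.Adj z u) (hz' : G.Adj z u') :
    G.degree u = G.degree u' := by
  classical
  by_cases huu : u = u'
  · rw [huu]
  obtain ⟨w₀, hw₀⟩ := exists_opposite hm h1 hgirth hthick hconn z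
  have hdu : G.dist u w₀ = m - 1 := dist_step hm h1 hthick hconn hcol hw₀ hz
  have hdu' : G.dist u' w₀ = m - 1 := dist_step hm h1 hthick hconn hcol hw₀ hz'
  set R : ∀ τ : V, G.Walk w₀ τ := fun τ => (hconn.exists_path_of_dist w₀ τ).choose with hR
  have hRspec : ∀ τ : V, (R τ).IsPath ∧ (R τ).length = G.dist w₀ τ := fun τ =>
    (hconn.exists_path_of_dist w₀ τ).choose_spec
  -- uniqueness of the neighbor of w₀ at distance m-2 from τ
  have claimC : ∀ τ : V, G.dist τ w₀ = m - 1 → ∀ y : V, G.Adj w₀ y →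
      G.dist y τ = m - 2 → y = (R τ).getVert 1 := by
    intro τ hτ y hwy hyτ
    have hRl : (R τ).length = m - 1 := by
      rw [(hRspec τ).2, SimpleGraph.dist_comm]
      exact hτ
    obtain ⟨Q, hQp, hQl⟩ := hconn.exists_path_of_dist y τ
    rw [hyτ] at hQl
    have hw₀Q : w₀ ∉ Q.support := by
      intro hmem
      have := mem_support_dist_le Q hmem
      rw [hQl] at this
      rw [SimpleGraph.dist_comm] at hτ
      omega
    have hW : (Walk.cons hwy Q).IsPath := hQp.cons hw₀Q
    have hWl : (Walk.cons hwy Q).length = m - 1 := by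
      rw [Walk.length_cons, hQl]; omega
    have heq : Walk.cons hwy Q = R τ :=
      path_unique hgirth _ _ hW (hRspec τ).1 (by omega)
    have : (Walk.cons hwy Q).getVert 1 = (R τ).getVert 1 := by rw [heq]
    simpa [Walk.getVert_cons_succ] using this
  -- pick a neighbor of w₀ distinct from both projections
  have hcard : 3 ≤ (G.neighborFinset w₀).card := by
    rw [card_neighborFinset_eq_degree]; exact hthick w₀
  have hnotsub : ¬ (G.neighborFinset w₀ ⊆ {(R u).getVert 1, (R u').getVert 1}) := by
    intro hsub
    have := Finset.card_le_card hsub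
    have h2 : ({(R u).getVert 1, (R u').getVert 1} : Finset V).card ≤ 2 :=
      (Finset.card_insert_le _ _).trans (by simp)
    omega
  obtain ⟨y, hy, hyne⟩ := Finset.not_subset.1 hnotsub
  have hwy : G.Adj w₀ y := (mem_neighborFinset G w₀ y).1 hy
  simp only [Finset.mem_insert, Finset.mem_singleton, not_or] at hyne
  -- dist y τ ∈ {m-2, m}, and ≠ m-2 by choice of y, for τ = u, u'
  have hkey : ∀ τ : V, G.dist τ w₀ = m - 1 → y ≠ (R τ).getVert 1 → G.dist τ y = m := by
    intro τ hτ hne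
    have hub : G.dist τ y ≤ m := dist_le_m hm h1 hthick τ y
    have hlb : m - 2 ≤ G.dist τ y := by
      have htri : G.dist τ w₀ ≤ G.dist τ y + G.dist y w₀ := hconn.dist_triangle
      have h1y : G.dist y w₀ ≤ 1 := by
        have := SimpleGraph.dist_le (Walk.cons hwy.symm Walk.nil)
        simpa using this
      omega
    have hnem1 : G.dist τ y ≠ m - 1 := by
      intro heq
      have hp1 := dist_parity hconn hcol τ w₀
      have hp2 := dist_parity hconn hcol τ y
      rw [hτ] at hp1
      rw [heq] at hp2
      have hcne := hcol w₀ y hwy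
      apply hcne
      by_cases hEv : Even (m - 1)
      · rw [← hp1.2 hEv, ← hp2.2 hEv]
      · exact bool_eq_of_ne_ne (c := col τ)
          (fun hc => hEv (hp1.1 hc.symm)) (fun hc => hEv (hp2.1 hc.symm))
    rcases Nat.lt_or_ge (G.dist τ y) (m - 1) with hlt | hge
    · exfalso
      have hm2 : G.dist y τ = m - 2 := by rw [SimpleGraph.dist_comm]; omega
      exact hne (claimC τ hτ y hwy hm2)
    · omega
  have hd1 : G.dist u y = m := hkey u hdu hyne.1
  have hd2 : G.dist u' y = m := hkey u' hdu' hyne.2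
  rw [degree_eq_of_opposite hm h1 hgirth hthick hconn hcol hd1,
    degree_eq_of_opposite hm h1 hgirth hthick hconn hcol hd2]

include hm h1 hgirth hthick hconn hcol in
private lemma degree_eq_of_samecolor :
    ∀ (n : ℕ) {u v : V} (w : G.Walk u v), w.length ≤ n → col u = col v →
      G.degree u = G.degree v := by
  intro n
  induction n with
  | zero =>
      intro u v w hw hcuv
      cases w with
      | nil => rfl
      | cons h p => simp at hw
  | succ n ih =>
      intro u v w hw hcuv
      cases w with
      | nil => rfl
      | cons h p =>
          rename_i z
          cases p with
          | nil => exact absurd hcuv (hcol _ _ h)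
          | cons h' p' =>
              rename_i z₂
              have hstep : G.degree u = G.degree z₂ :=
                degree_eq_of_common_nbr hm h1 hgirth hthick hconn hcol h.symm h'
              have hcz : col z₂ = col v := by
                have c1 := hcol _ _ h
                have c2 := hcol _ _ h'
                have : col u = col z₂ := bool_eq_of_ne_ne c1 (fun hc => c2 hc.symm)
                rw [← this, hcuv]
              rw [hstep]
              exact ih p' (by simp at hw; omega) hcz

end Final


/-- let `L` be a finite generalized thick `m`-gon (`m ≥ 2`): a connected
bipartite graph with proper red/blue coloring `col`, in which any two edges lie on a common
circuit of combinatorial length `2m`, any two such circuits sharing an edge are isomorphic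
via an isomorphism fixing their intersection pointwise, and every vertex has valence ≥ 3.
Then there exist integers `r, b ≥ 2` such that every red vertex lies in exactly `r + 1` edges
and every blue vertex lies in exactly `b + 1` edges; moreover if `m` is odd then `r = b`. -/
theorem generalized_polygon_regularity {V : Type} [Fintype V] [DecidableEq V]
    (G : SimpleGraph V) [DecidableRel G.Adj] (hconn : G.Connected)
    (m : ℕ) (hm : 2 ≤ m)
    (col : V → Bool) (hcol : ∀ u v : V, G.Adj u v → col u ≠ col v)
    (h1 : ∀ e₁ ∈ G.edgeSet, ∀ e₂ ∈ G.edgeSet, ∃ (v : V) (c : G.Walk v v),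
      c.IsCycle ∧ c.length = 2 * m ∧ e₁ ∈ c.edges ∧ e₂ ∈ c.edges)
    (h2 : ∀ (v₁ v₂ : V) (c₁ : G.Walk v₁ v₁) (c₂ : G.Walk v₂ v₂),
      c₁.IsCycle → c₂.IsCycle → c₁.length = 2 * m → c₂.length = 2 * m →
      (∃ e, e ∈ c₁.edges ∧ e ∈ c₂.edges) →
      ∃ f : {x : V // x ∈ c₁.support} ≃ {x : V // x ∈ c₂.support},
        (∀ a b : {x : V // x ∈ c₁.support},
          s(a.1, b.1) ∈ c₁.edges ↔ s((f a).1, (f b).1) ∈ c₂.edges) ∧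
        (∀ a : {x : V // x ∈ c₁.support}, a.1 ∈ c₂.support → (f a).1 = a.1))
    (hthick : ∀ v : V, 3 ≤ G.degree v) :
    ∃ r b : ℕ, 2 ≤ r ∧ 2 ≤ b ∧
      (∀ v : V, col v = true → G.degree v = r + 1) ∧
      (∀ v : V, col v = false → G.degree v = b + 1) ∧
      (Odd m → r = b) := by
  classical
  have hgirth : ∀ (u : V) (c : G.Walk u u), c.IsCycle → 2 * m ≤ c.length :=
    no_short_cycle hm h1 h2
  obtain ⟨v₀⟩ := hconn.nonempty
  obtain ⟨v₁, hv₁⟩ := exists_nbr hthick v₀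
  have hne₀₁ := hcol v₀ v₁ hv₁
  have hex_true : ∃ u, col u = true := by
    cases h : col v₀ with
    | true => exact ⟨v₀, h⟩
    | false =>
        refine ⟨v₁, ?_⟩
        cases h' : col v₁ with
        | true => rfl
        | false => rw [h, h'] at hne₀₁; exact absurd rfl hne₀₁
  have hex_false : ∃ u, col u = false := by
    cases h : col v₀ with
    | false => exact ⟨v₀, h⟩
    | true =>
        refine ⟨v₁, ?_⟩
        cases h' : col v₁ with
        | false => rfl
        | true => rw [h, h'] at hne₀₁; exact absurd rfl hne₀₁
  obtain ⟨ur, hur⟩ := hex_true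
  obtain ⟨ub, hub⟩ := hex_false
  have hdeg_same : ∀ u v : V, col u = col v → G.degree u = G.degree v := by
    intro u v hc
    obtain ⟨w⟩ := hconn.preconnected u v
    exact degree_eq_of_samecolor hm h1 hgirth hthick hconn hcol w.length w le_rfl hc
  refine ⟨G.degree ur - 1, G.degree ub - 1, ?_, ?_, ?_, ?_, ?_⟩
  · have := hthick ur; omega
  · have := hthick ub; omega
  · intro v hv
    have := hdeg_same v ur (by rw [hv, hur])
    have h3 := hthick ur
    omega
  · intro v hv
    have := hdeg_same v ub (by rw [hv, hub])
    have h3 := hthick ub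
    omega
  · intro hodd
    obtain ⟨w, hw⟩ := exists_opposite hm h1 hgirth hthick hconn ur
    have hwcol : col w = false := by
      have hp := dist_parity hconn hcol ur w
      rw [hw] at hp
      cases h' : col w with
      | false => rfl
      | true =>
          exfalso
          have : col ur = col w := by rw [hur, h']
          exact (Nat.not_even_iff_odd.2 hodd) (hp.1 this)
    have hd1 : G.degree ur = G.degree w :=
      degree_eq_of_opposite hm h1 hgirth hthick hconn hcol hw
    have hd2 : G.degree w = G.degree ub := hdeg_same w ub (by rw [hwcol, hub])
    omega
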